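/- arXiv:1604.07587 — 7 statements merged into one kernel-verified Lean document; each statement's English description precedes it below -/
import Mathlib

section
/- Let $\{x_n^*\}$ be a sequence in $\ell_1$ converging coordinatewise to $0$ such that $\lim_{n\to\infty}\|x_n^*\|$ exists. Then for every $x^* \in \ell_1$, $\lim_{n\to\infty}\|x_n^* + x^*\| = \lim_{n\to\infty}\|x_n^*\| + \|x^*\|$. -/
open Filter Topology ENNReal NormedSpace

noncomputable section

instance : Fact ((1:ℝ≥0∞) ≤ 1) := ⟨le_rfl⟩

/-- The space `ℓ₁` of absolutely summable real sequences. -/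
abbrev ell1 : Type := lp (fun _ : ℕ => ℝ) 1

/-- The standard unit vector basis of `ℓ₁`. -/
def basisv (i : ℕ) : ell1 := lp.single 1 i (1:ℝ)

/-- The weak-star topology `σ(ℓ₁, X)` on `ℓ₁` induced by a predual `X` via an
isometric identification `e` of the dual of `X` with `ℓ₁`. -/
def wstar (X : Type*) [NormedAddCommGroup X] [NormedSpace ℝ X]
    (e : StrongDual ℝ X ≃ₗᵢ[ℝ] ell1) : TopologicalSpace ell1 :=
  TopologicalSpace.induced (fun y => StrongDual.toWeakDual (e.symm y)) inferInstance

/-- The weak-star topology `σ(Y*, Y)` on the dual of a normed space `Y`. -/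
def wsDual (Y : Type*) [NormedAddCommGroup Y] [NormedSpace ℝ Y] :
    TopologicalSpace (StrongDual ℝ Y) :=
  TopologicalSpace.induced (fun φ : StrongDual ℝ Y => StrongDual.toWeakDual φ)
    inferInstance

theorem stmt0 (x : ℕ → ell1) (L : ℝ)
    (hcoord : ∀ i : ℕ, Tendsto (fun n => x n i) atTop (𝓝 (0:ℝ)))
    (hL : Tendsto (fun n => ‖x n‖) atTop (𝓝 L)) :
    ∀ y : ell1, Tendsto (fun n => ‖x n + y‖) atTop (𝓝 (L + ‖y‖)) := by
  intro y
  have norm_eq : ∀ f : ell1, ‖f‖ = ∑' i, |f i| := by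
    intro f
    have := lp.norm_eq_tsum_rpow (p := 1) (by norm_num) f
    simpa using this
  have summ : ∀ f : ell1, Summable (fun i => |f i|) := by
    intro f
    have h := (lp.memℓp f).summable (p := 1) (by norm_num)
    simpa using h
  -- termwise differences
  set g : ℕ → ℕ → ℝ := fun n i => |x n i + y i| - |x n i| - |y i| with hg
  have hbound : ∀ n i, ‖g n i‖ ≤ 2 * |y i| := by
    intro n i
    rw [Real.norm_eq_abs]
    have h1 : |x n i + y i| - |x n i| ≤ |y i| := by
      have := abs_add_le (x n i) (y i); linarith
    have h2 : |x n i| - |y i| ≤ |x n i + y i| := by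
      have := abs_sub_abs_le_abs_sub (x n i) (-(y i))
      simp only [abs_neg, sub_neg_eq_add] at this
      linarith
    rw [abs_le]; constructor <;> simp only [hg] <;> linarith
  have hptwise : ∀ i, Tendsto (fun n => g n i) atTop (𝓝 0) := by
    intro i
    have h0 : Tendsto (fun n => x n i + y i) atTop (𝓝 ((0:ℝ) + y i)) :=
      (hcoord i).add tendsto_const_nhds
    have h1 : Tendsto (fun n => |x n i + y i|) atTop (𝓝 |y i|) := by
      simpa using h0.abs
    have h2 : Tendsto (fun n => |x n i|) atTop (𝓝 0) := by
      simpa using (hcoord i).abs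
    have h3 : Tendsto (fun n => |x n i + y i| - |x n i| - |y i|) atTop
        (𝓝 (|y i| - 0 - |y i|)) := (h1.sub h2).sub tendsto_const_nhds
    simpa [hg] using h3
  have hsumg : Tendsto (fun n => ∑' i, g n i) atTop (𝓝 0) := by
    have := tendsto_tsum_of_dominated_convergence (f := g) (g := fun _ => (0:ℝ))
      (bound := fun i => 2 * |y i|) (((summ y).mul_left 2)) hptwise
      (Filter.Eventually.of_forall fun n => hbound n)
    simpa using this
  have hkey : ∀ n, ‖x n + y‖ = (∑' i, g n i) + ‖x n‖ + ‖y‖ := by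
    intro n
    have s1 : Summable (fun i => |x n i + y i|) := by
      have := summ (x n + y)
      simpa using this
    have s2 := summ (x n)
    have s3 := summ y
    have h1 : ∑' i, g n i = (∑' i, |x n i + y i|) - (∑' i, |x n i|) - (∑' i, |y i|) := by
      simp only [hg]
      rw [Summable.tsum_sub (s1.sub s2) s3, Summable.tsum_sub s1 s2]
    have h2 : ‖x n + y‖ = ∑' i, |x n i + y i| := by
      rw [norm_eq (x n + y)]
      exact tsum_congr fun i => by simp [lp.coeFn_add]
    rw [h2, norm_eq (x n), norm_eq y, h1]; ring
  have : Tendsto (fun n => (∑' i, g n i) + ‖x n‖ + ‖y‖) atTop (𝓝 (0 + L + ‖y‖)) :=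
    (hsumg.add hL).add tendsto_const_nhds
  simp only [zero_add] at this
  simpa only [hkey] using this
end
end

section
/- Let $\{x_n^*\}$ be a sequence in $\ell_1$ converging coordinatewise to $x_0^* \in \ell_1$ and such that $\lim_{n\to\infty}\|x_n^* - x_0^*\|$ exists. Then $\lim_{m\to\infty}\lim_{n\to\infty}\|x_n^* - x_m^*\| = 2\lim_{n\to\infty}\|x_n^* - x_0^*\|$. -/
open Filter Topology ENNReal NormedSpace

noncomputable section

set_option maxHeartbeats 1000000 in
lemma ell1_norm' (f : ell1) : ‖f‖ = ∑' i, ‖f i‖ := by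
  have := lp.norm_eq_tsum_rpow (p := 1) (by norm_num) f
  simpa using this

set_option maxHeartbeats 1000000 in
lemma ell1_summ' (f : ell1) : Summable fun i => ‖f i‖ := by
  have := (lp.memℓp f).summable (p := 1) (by norm_num)
  simpa using this

set_option maxHeartbeats 1000000 in
lemma key_lim (y : ℕ → ell1) (z : ell1) (L : ℝ)
    (hc : ∀ i, Tendsto (fun n => y n i) atTop (𝓝 0))
    (hn : Tendsto (fun n => ‖y n‖) atTop (𝓝 L)) :
    Tendsto (fun n => ‖y n - z‖) atTop (𝓝 (L + ‖z‖)) := by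
  rw [Metric.tendsto_nhds]
  intro ε hε
  -- choose N0 with small tail of z
  have hz := ell1_summ' z
  have hps : Tendsto (fun n => ∑ i ∈ Finset.range n, ‖z i‖) atTop (𝓝 (∑' i, ‖z i‖)) :=
    hz.hasSum.tendsto_sum_nat
  have : ∀ᶠ n in atTop, ∑' i, ‖z i‖ - ε/4 < ∑ i ∈ Finset.range n, ‖z i‖ :=
    hps.eventually (eventually_gt_nhds (by linarith))
  obtain ⟨N0, hN0⟩ := this.exists
  have htail : ∑' i, ‖z (i + N0)‖ < ε/4 := by
    have hsplit := Summable.sum_add_tsum_nat_add N0 hz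
    linarith
  -- eventually bounds
  have E1 : ∀ᶠ n in atTop, |‖y n‖ - L| < ε/4 := by
    have := Metric.tendsto_nhds.1 hn (ε/4) (by linarith)
    simpa [Real.dist_eq] using this
  have hsum0 : Tendsto (fun n => ∑ i ∈ Finset.range N0, ‖y n i‖) atTop (𝓝 0) := by
    have : Tendsto (fun n => ∑ i ∈ Finset.range N0, ‖y n i‖) atTop
        (𝓝 (∑ i ∈ Finset.range N0, (0:ℝ))) := by
      refine tendsto_finset_sum _ fun i _ => ?_
      simpa using (hc i).norm
    simpa using this
  have E2 : ∀ᶠ n in atTop, ∑ i ∈ Finset.range N0, ‖y n i‖ < ε/8 := by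
    have := Metric.tendsto_nhds.1 hsum0 (ε/8) (by linarith)
    refine this.mono fun n h => ?_
    have hnn : 0 ≤ ∑ i ∈ Finset.range N0, ‖y n i‖ :=
      Finset.sum_nonneg fun i _ => norm_nonneg _
    rwa [Real.dist_eq, sub_zero, abs_of_nonneg hnn] at h
  filter_upwards [E1, E2] with n h1 h2
  rw [Real.dist_eq]
  set w : ell1 := y n - z with hw
  have hwc : ∀ i, (w : ℕ → ℝ) i = y n i - z i := by
    intro i; simp [hw]
  -- upper bound
  have hup : ‖y n - z‖ ≤ ‖y n‖ + ‖z‖ := norm_sub_le _ _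
  -- summabilities
  have hy := ell1_summ' (y n)
  have hytail : Summable fun i => ‖y n (i + N0)‖ := (summable_nat_add_iff N0).2 hy
  have hztail : Summable fun i => ‖z (i + N0)‖ := (summable_nat_add_iff N0).2 hz
  have hwsum := ell1_summ' w
  -- split norms
  have hwn : ‖w‖ = ∑ i ∈ Finset.range N0, ‖(w : ℕ → ℝ) i‖ + ∑' i, ‖(w : ℕ → ℝ) (i + N0)‖ := by
    rw [ell1_norm' w, ← Summable.sum_add_tsum_nat_add N0 hwsum]
  have hyn : ‖y n‖ = ∑ i ∈ Finset.range N0, ‖y n i‖ + ∑' i, ‖y n (i + N0)‖ := by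
    rw [ell1_norm' (y n), ← Summable.sum_add_tsum_nat_add N0 hy]
  have hzn : ‖z‖ = ∑ i ∈ Finset.range N0, ‖z i‖ + ∑' i, ‖z (i + N0)‖ := by
    rw [ell1_norm' z, ← Summable.sum_add_tsum_nat_add N0 hz]
  -- head lower bound
  have hhead : ∑ i ∈ Finset.range N0, ‖z i‖ - ∑ i ∈ Finset.range N0, ‖y n i‖
      ≤ ∑ i ∈ Finset.range N0, ‖(w : ℕ → ℝ) i‖ := by
    rw [← Finset.sum_sub_distrib]
    refine Finset.sum_le_sum fun i _ => ?_
    rw [hwc i]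
    calc ‖z i‖ - ‖y n i‖ ≤ ‖z i - y n i‖ := norm_sub_norm_le _ _
      _ = ‖y n i - z i‖ := norm_sub_rev _ _
  -- tail lower bound
  have htail2 : (∑' i, ‖y n (i + N0)‖) - ∑' i, ‖z (i + N0)‖
      ≤ ∑' i, ‖(w : ℕ → ℝ) (i + N0)‖ := by
    rw [← Summable.tsum_sub hytail hztail]
    refine Summable.tsum_le_tsum (fun i => ?_) (hytail.sub hztail)
      ((summable_nat_add_iff N0).2 hwsum)
    rw [hwc]
    exact (norm_sub_norm_le _ _)
  have hlow : ‖z‖ + ‖y n‖ - 2 * (∑ i ∈ Finset.range N0, ‖y n i‖)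
      - 2 * (∑' i, ‖z (i + N0)‖) ≤ ‖w‖ := by
    rw [hwn]
    have := add_le_add hhead htail2
    linarith [hyn, hzn]
  rw [abs_sub_lt_iff]
  constructor
  · have : ‖y n‖ < L + ε/4 := by
      rcases abs_sub_lt_iff.mp h1 with ⟨ha, hb⟩; linarith
    linarith
  · have : L - ε/4 < ‖y n‖ := by
      rcases abs_sub_lt_iff.mp h1 with ⟨ha, hb⟩; linarith
    have hlow' := hlow
    rw [← hw] at *
    linarith

set_option maxHeartbeats 1000000 in
theorem stmt1 (x : ℕ → ell1) (x0 : ell1) (L : ℝ)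
    (hcoord : ∀ i : ℕ, Tendsto (fun n => x n i) atTop (𝓝 (x0 i)))
    (hL : Tendsto (fun n => ‖x n - x0‖) atTop (𝓝 L)) :
    ∃ Lm : ℕ → ℝ, (∀ m : ℕ, Tendsto (fun n => ‖x n - x m‖) atTop (𝓝 (Lm m))) ∧
      Tendsto Lm atTop (𝓝 (2 * L)) := by
  refine ⟨fun m => L + ‖x m - x0‖, fun m => ?_, ?_⟩
  · have hc : ∀ i, Tendsto (fun n => (x n - x0) i) atTop (𝓝 0) := by
      intro i
      have : Tendsto (fun n => x n i - x0 i) atTop (𝓝 (x0 i - x0 i)) :=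
        (hcoord i).sub tendsto_const_nhds
      simpa using this
    have := key_lim (fun n => x n - x0) (x m - x0) L hc hL
    simpa [sub_sub_sub_cancel_right] using this
  · have : Tendsto (fun m => L + ‖x m - x0‖) atTop (𝓝 (L + L)) :=
      tendsto_const_nhds.add hL
    simpa [two_mul] using this
end
end

section
/- Let $X$ be a Banach space whose dual is isometric to $\ell_1$ (with standard basis $\{e_i^*\}$), and suppose there is $0 \le r < 1$ such that every $w^*$-limit point of the set of extreme points of $B_{\ell_1}$ lies in $rB_{\ell_1}$. Then for every $x \in B_X$, $\limsup_{i\to\infty} |e_i^*(x)| \le r$. -/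
open Filter Topology ENNReal NormedSpace

noncomputable section

theorem stmt2 (X : Type*) [NormedAddCommGroup X] [NormedSpace ℝ X] [CompleteSpace X]
    (e : StrongDual ℝ X ≃ₗᵢ[ℝ] ell1) (r : ℝ) (hr0 : 0 ≤ r) (hr1 : r < 1)
    (hlim : ∀ y : ell1,
      y ∈ @closure _ (wstar X e) ({z : ell1 | ∃ i, z = basisv i ∨ z = -basisv i} \ {y}) →
      ‖y‖ ≤ r) :
    ∀ x : X, ‖x‖ ≤ 1 → Filter.limsup (fun i => |(e.symm (basisv i)) x|) atTop ≤ r := by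
  intro x hx
  by_contra hcon
  have hrlt : r < Filter.limsup (fun i => |(e.symm (basisv i)) x|) atTop := not_le.mp hcon
  set f : ℕ → ℝ := fun i => |(e.symm (basisv i)) x| with hf
  have hnormb : ∀ i, ‖basisv i‖ = 1 := by
    intro i
    have := lp.norm_single (p := 1) (E := fun _ : ℕ => ℝ) (by norm_num) i (1:ℝ)
    simpa [basisv] using this
  set L := Filter.limsup f atTop with hL
  set c : ℝ := (r + L) / 2 with hc
  have hc1 : r < c := by simp only [hc]; linarith
  have hc2 : c < L := by simp only [hc]; linarith
  have hcb : IsCoboundedUnder (· ≤ ·) atTop f :=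
    isCoboundedUnder_le_of_eventually_le atTop (x := 0)
      (Eventually.of_forall fun i => abs_nonneg _)
  have hfreq : ∃ᶠ i in atTop, c < f i := frequently_lt_of_lt_limsup hcb hc2
  obtain ⟨n, hnmono, hn⟩ := extraction_of_frequently_atTop hfreq
  -- the sequence of basis vectors
  set z : ℕ → ell1 := fun k => basisv (n k) with hz
  have hbinj : Function.Injective basisv := by
    intro i j h
    by_contra hij
    have h1 := congrArg (fun v : ell1 => (v : ℕ → ℝ) i) h
    simp only [basisv] at h1
    rw [lp.single_apply_self, lp.single_apply_ne 1 j _ hij] at h1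
    exact one_ne_zero h1
  have hzinj : Function.Injective z := hbinj.comp hnmono.injective
  -- set up the weak-star topology
  letI T : TopologicalSpace ell1 := wstar X e
  set φ : ell1 → WeakDual ℝ X := fun y => StrongDual.toWeakDual (e.symm y) with hφ
  have hφcont : @Continuous _ _ T _ φ := continuous_induced_dom
  -- Banach–Alaoglu
  have hK : IsCompact (WeakDual.toStrongDual ⁻¹' Metric.closedBall (0 : StrongDual ℝ X) 1) :=
    WeakDual.isCompact_closedBall (𝕜 := ℝ) (E := X) 0 1
  have hmemK : ∀ k, φ (z k) ∈ WeakDual.toStrongDual ⁻¹' Metric.closedBall (0 : StrongDual ℝ X) 1 := by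
    intro k
    simp only [Set.mem_preimage, Metric.mem_closedBall, dist_zero_right]
    have : ‖e.symm (z k)‖ = ‖z k‖ := e.symm.norm_map _
    simpa [φ, this, hz, hnormb] using le_refl (1:ℝ)
  have hle : map (fun k => φ (z k)) atTop ≤ 𝓟 (WeakDual.toStrongDual ⁻¹' Metric.closedBall (0 : StrongDual ℝ X) 1) :=
    Filter.tendsto_principal.mpr (Eventually.of_forall hmemK)
  obtain ⟨ψ, hψK, hψ⟩ := hK.exists_clusterPt hle
  -- pull back the cluster point
  set y : ell1 := e (StrongDual.toWeakDual.symm ψ) with hy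
  have hφy : φ y = ψ := by simp only [φ, hy, LinearIsometryEquiv.symm_apply_apply, LinearEquiv.apply_symm_apply]
  have hyCl : @ClusterPt _ T y (map z atTop) := by
    have hnhds : @nhds _ T y = comap φ (𝓝 (φ y)) := nhds_induced φ y
    rw [ClusterPt, hnhds, hφy]
    rw [← Filter.map_neBot_iff φ, Filter.push_pull', Filter.map_map]
    exact hψ.neBot
  -- y belongs to the closure of S \ {y}
  have hzne : ∀ᶠ k in atTop, z k ≠ y := by
    by_cases h : ∃ k0, z k0 = y
    · obtain ⟨k0, hk0⟩ := h
      filter_upwards [eventually_gt_atTop k0] with k hk hzk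
      exact (Nat.ne_of_gt hk) (hzinj (hzk.trans hk0.symm))
    · exact Eventually.of_forall fun k hk => h ⟨k, hk⟩
  have hyS : ‖y‖ ≤ r := by
    apply hlim y
    have hle2 : map z atTop ≤ 𝓟 ({w : ell1 | ∃ i, w = basisv i ∨ w = -basisv i} \ {y}) := by
      rw [le_principal_iff, Filter.mem_map]
      filter_upwards [hzne] with k hk
      exact ⟨⟨n k, Or.inl rfl⟩, hk⟩
    exact mem_closure_iff_clusterPt.mpr (hyCl.mono hle2)
  -- evaluation at x is weak-star continuous
  set g : ell1 → ℝ := fun w => |(e.symm w) x| with hg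
  have hgcont : @Continuous _ _ T _ g := by
    have h1 : Continuous fun ψ' : WeakDual ℝ X => |ψ' x| := (WeakDual.eval_continuous x).abs
    exact h1.comp hφcont
  have hgy : c ≤ g y := by
    have hmc : @MapClusterPt _ T _ y atTop z := hyCl
    have hmc2 : @MapClusterPt _ _ _ (g y) atTop (g ∘ z) :=
      hmc.continuousAt_comp (hgcont.continuousAt)
    have hle3 : map (g ∘ z) atTop ≤ 𝓟 (Set.Ici c) := by
      rw [le_principal_iff, Filter.mem_map]
      filter_upwards with k
      exact le_of_lt (hn k)
    have : g y ∈ closure (Set.Ici c) := mem_closure_iff_clusterPt.mpr (hmc2.clusterPt.mono hle3)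
    rwa [isClosed_Ici.closure_eq] at this
  have hgyr : g y ≤ r := by
    calc g y = ‖(e.symm y) x‖ := (Real.norm_eq_abs _).symm
    _ ≤ ‖e.symm y‖ * ‖x‖ := (e.symm y).le_opNorm x
    _ ≤ ‖y‖ * 1 := by
        have := e.symm.norm_map y
        exact mul_le_mul (le_of_eq this) hx (norm_nonneg x) (norm_nonneg _)
    _ ≤ r := by simpa using hyS
  linarith
end
end

section
/- Let $X$ be a predual of $\ell_1$ such that all $w^*$-limit points of the extreme points of $B_{\ell_1}$ lie in $rB_{\ell_1}$ for some $0 \le r < 1$. If $\{x_n^*\} \subset \ell_1$ is $\sigma(\ell_1, X)$-convergent to $x^*$ and converges to $0$ coordinatewise, then $\|x^*\| \le r \liminf_{n\to\infty}\|x_n^*\|$. -/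
open Filter Topology ENNReal NormedSpace

noncomputable section

lemma ell1_hasSum_abs (y : ell1) : HasSum (fun i => |y i|) ‖y‖ := by
  have h := lp.hasSum_norm (p := 1) (by norm_num) y
  simpa using h

lemma norm_basisv (i : ℕ) : ‖basisv i‖ = 1 := by
  have := lp.norm_single (E := fun _ : ℕ => ℝ) (p := 1) (by norm_num) i (1:ℝ)
  simpa [basisv] using this

lemma ell1_hasSum_apply (T : ell1 →L[ℝ] ℝ) (y : ell1) :
    HasSum (fun i => y i * T (basisv i)) (T y) := by
  have h := (lp.hasSum_single (p := 1) (by norm_num) y).mapL T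
  have hfe : (fun i => T (lp.single 1 i (y i))) = fun i => y i * T (basisv i) := by
    funext i
    have : lp.single 1 i (y i) = y i • basisv i := by
      rw [basisv, ← lp.single_smul, smul_eq_mul, mul_one]
    rw [this, map_smul, smul_eq_mul]
  rwa [hfe] at h


lemma basisv_apply (i j : ℕ) : basisv i j = if j = i then (1:ℝ) else 0 := by
  rcases eq_or_ne j i with h | h
  · subst h; simp [basisv, lp.single_apply_self]
  · simp [basisv, lp.single_apply_ne _ _ _ h, h]

lemma claimA (X : Type*) [NormedAddCommGroup X] [NormedSpace ℝ X]
    (e : StrongDual ℝ X ≃ₗᵢ[ℝ] ell1) (r : ℝ)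
    (hlim : ∀ y : ell1,
      y ∈ @closure _ (wstar X e) ({z : ell1 | ∃ i, z = basisv i ∨ z = -basisv i} \ {y}) →
      ‖y‖ ≤ r)
    (v : X) (ε : ℝ) (hε : 0 < ε) :
    {i : ℕ | r * ‖v‖ + ε ≤ |(e.symm (basisv i)) v|}.Finite := by
  by_contra hS
  set c : ℕ → ℝ := fun i => (e.symm (basisv i)) v with hc
  set S := {i : ℕ | r * ‖v‖ + ε ≤ |c i|} with hSdef
  have hSinf : S.Infinite := hS
  set κ : ℕ → ℕ := fun n => ((hSinf.natEmbedding S n : S) : ℕ) with hκ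
  have hκinj : Function.Injective κ := fun a b h => (hSinf.natEmbedding S).injective (Subtype.ext h)
  have hκS : ∀ n, κ n ∈ S := fun n => (hSinf.natEmbedding S n).2
  set z : ℕ → ell1 := fun n => (if 0 ≤ c (κ n) then (1:ℝ) else -1) • basisv (κ n) with hz
  have hznorm : ∀ n, ‖z n‖ = 1 := by
    intro n
    rw [hz]
    rw [norm_smul, norm_basisv]
    split <;> simp
  have hzval : ∀ n, (e.symm (z n)) v = |c (κ n)| := by
    intro n
    simp only [hz, map_smul]
    rcases le_or_gt 0 (c (κ n)) with h | h
    · rw [if_pos h, abs_of_nonneg h]; simp [hc]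
    · rw [if_neg (not_le.mpr h), abs_of_neg h]; simp [hc]
  have hzmem : ∀ n, z n ∈ {w : ell1 | ∃ i, w = basisv i ∨ w = -basisv i} := by
    intro n
    refine ⟨κ n, ?_⟩
    by_cases h : 0 ≤ c (κ n)
    · left; simp only [hz]; rw [if_pos h, one_smul]
    · right; simp only [hz]; rw [if_neg h, neg_one_smul]
  have hzinj : Function.Injective z := by
    intro a b hab
    have ha : z a (κ a) ≠ 0 := by
      rw [hz]; simp only [lp.coeFn_smul, Pi.smul_apply, basisv_apply, if_pos rfl, smul_eq_mul,
        mul_one]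
      split <;> norm_num
    have hb : z a (κ b) ≠ 0 := by
      rw [hab, hz]; simp only [lp.coeFn_smul, Pi.smul_apply, basisv_apply, if_pos rfl, smul_eq_mul,
        mul_one]
      split <;> norm_num
    have : κ a = κ b := by
      by_contra hne
      apply hb
      show ((if 0 ≤ c (κ a) then (1:ℝ) else -1) • basisv (κ a)) (κ b) = 0
      rw [lp.coeFn_smul, Pi.smul_apply, basisv_apply]
      rw [if_neg (show ¬ κ b = κ a from fun h => hne h.symm), smul_zero]
    exact hκinj this
  -- compactness
  letI τ : TopologicalSpace ell1 := wstar X e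
  set φ : ell1 → WeakDual ℝ X := fun y => StrongDual.toWeakDual (e.symm y) with hφ
  have hind : @Topology.IsInducing _ _ τ _ φ := @Topology.IsInducing.mk _ _ τ _ φ rfl
  have himg : φ '' (Metric.closedBall (0:ell1) 1) =
      WeakDual.toStrongDual ⁻¹' (Metric.closedBall (0 : StrongDual ℝ X) 1) := by
    ext g
    constructor
    · rintro ⟨y, hy, rfl⟩
      simp only [Set.mem_preimage, Metric.mem_closedBall, dist_zero_right] at hy ⊢
      show ‖WeakDual.toStrongDual (φ y)‖ ≤ 1
      have h2 : WeakDual.toStrongDual (φ y) = e.symm y := rfl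
      rw [h2, e.symm.norm_map]
      exact hy
    · intro hg
      simp only [Set.mem_preimage, Metric.mem_closedBall, dist_zero_right] at hg
      refine ⟨e (WeakDual.toStrongDual g), ?_, ?_⟩
      · simp only [Metric.mem_closedBall, dist_zero_right]
        rw [e.norm_map]
        exact hg
      · show StrongDual.toWeakDual (e.symm (e _)) = g
        rw [e.symm_apply_apply]
        rfl
  have hK : @IsCompact _ τ (Metric.closedBall (0:ell1) 1) := by
    rw [hind.isCompact_iff, himg]
    exact WeakDual.isCompact_closedBall (𝕜 := ℝ) (E := X) 0 1
  have hzK : ∀ n, z n ∈ Metric.closedBall (0:ell1) 1 := by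
    intro n; simp [hznorm n]
  have hle : Filter.map z atTop ≤ 𝓟 (Metric.closedBall (0:ell1) 1) := by
    have : Filter.Tendsto z atTop (𝓟 (Metric.closedBall (0:ell1) 1)) := by
      rw [Filter.tendsto_principal]
      exact Filter.Eventually.of_forall hzK
    exact this
  obtain ⟨y, hyK, hy⟩ := @IsCompact.exists_clusterPt _ τ _ hK (Filter.map z atTop) _ hle
  -- (a) ‖y‖ ≤ r
  have hyr : ‖y‖ ≤ r := by
    apply hlim
    rw [mem_closure_iff_clusterPt]
    have hfin : {n | z n = y}.Finite := by
      apply Set.Subsingleton.finite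
      intro a ha b hb
      exact hzinj (ha.trans hb.symm)
    have hev : ∀ᶠ n in atTop, z n ∈
        ({w : ell1 | ∃ i, w = basisv i ∨ w = -basisv i} \ {y}) := by
      rw [← Nat.cofinite_eq_atTop, eventually_cofinite]
      apply Set.Finite.subset hfin
      intro n hn
      simp only [Set.mem_setOf_eq, Set.mem_diff, Set.mem_singleton_iff, not_and, not_not] at hn ⊢
      exact hn (hzmem n)
    exact hy.mono (le_principal_iff.mpr hev)
  -- (b) evaluation
  have hψcont : @Continuous _ _ τ _ (fun w : ell1 => (e.symm w) v) := by
    have h1 : @Continuous _ _ τ _ φ := continuous_induced_dom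
    exact (WeakDual.eval_continuous v).comp h1
  have hcl : ClusterPt ((e.symm y) v)
      (Filter.map ((fun w : ell1 => (e.symm w) v) ∘ z) atTop) := by
    have h3 := hy.map hψcont.continuousAt
      (Filter.tendsto_map (f := fun w : ell1 => (e.symm w) v))
    rwa [Filter.map_map] at h3
  have hyge : r * ‖v‖ + ε ≤ (e.symm y) v := by
    have hmem : (e.symm y) v ∈ closure (Set.Ici (r * ‖v‖ + ε)) := by
      rw [mem_closure_iff_clusterPt]
      refine hcl.mono (le_principal_iff.mpr ?_)
      rw [Filter.mem_map]
      refine Filter.Eventually.of_forall fun n => ?_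
      show (e.symm (z n)) v ∈ Set.Ici (r * ‖v‖ + ε)
      rw [Set.mem_Ici, hzval n]
      exact hκS n
    rwa [isClosed_Ici.closure_eq, Set.mem_Ici] at hmem
  have hub : (e.symm y) v ≤ r * ‖v‖ := by
    calc (e.symm y) v ≤ |(e.symm y) v| := le_abs_self _
    _ ≤ ‖e.symm y‖ * ‖v‖ := by
        have := (e.symm y).le_opNorm v
        rwa [Real.norm_eq_abs] at this
    _ = ‖y‖ * ‖v‖ := by rw [e.symm.norm_map]
    _ ≤ r * ‖v‖ := mul_le_mul_of_nonneg_right hyr (norm_nonneg v)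
  linarith

lemma bound_one (X : Type*) [NormedAddCommGroup X] [NormedSpace ℝ X]
    (e : StrongDual ℝ X ≃ₗᵢ[ℝ] ell1) (v : X) (w : ell1) (F : Finset ℕ) (b : ℝ)
    (hF : ∀ i ∉ F, |(e.symm (basisv i)) v| ≤ b) :
    |(e.symm w) v| ≤ (∑ i ∈ F, |w i|) * ‖v‖ + b * ‖w‖ := by
  obtain ⟨i₀, hi₀⟩ := F.exists_notMem
  have hb : 0 ≤ b := (abs_nonneg _).trans (hF i₀ hi₀)
  set T : ell1 →L[ℝ] ℝ := (ContinuousLinearMap.apply ℝ ℝ v).comp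
    ((e.symm.toContinuousLinearEquiv : ell1 ≃L[ℝ] StrongDual ℝ X) :
      ell1 →L[ℝ] StrongDual ℝ X) with hT
  have hTw : ∀ u : ell1, T u = (e.symm u) v := fun u => rfl
  have hci : ∀ i, |T (basisv i)| ≤ ‖v‖ := by
    intro i
    rw [hTw]
    calc |(e.symm (basisv i)) v| ≤ ‖e.symm (basisv i)‖ * ‖v‖ := by
          have := (e.symm (basisv i)).le_opNorm v
          rwa [Real.norm_eq_abs] at this
    _ = ‖v‖ := by rw [e.symm.norm_map, norm_basisv, one_mul]
  have hcib : ∀ i ∉ F, |T (basisv i)| ≤ b := by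
    intro i hi; rw [hTw]; exact hF i hi
  have hsum := ell1_hasSum_apply T w
  have habs := ell1_hasSum_abs w
  have hsummable : Summable (fun i => w i * T (basisv i)) := hsum.summable
  have heq := (Summable.sum_add_tsum_compl (s := F) hsummable).symm
  rw [hsum.tsum_eq] at heq
  rw [← hTw w, heq]
  refine (abs_add_le _ _).trans (add_le_add ?_ ?_)
  · calc |∑ i ∈ F, w i * T (basisv i)| ≤ ∑ i ∈ F, |w i * T (basisv i)| :=
          Finset.abs_sum_le_sum_abs _ _
    _ ≤ ∑ i ∈ F, |w i| * ‖v‖ := Finset.sum_le_sum fun i _ => by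
          rw [abs_mul]; exact mul_le_mul_of_nonneg_left (hci i) (abs_nonneg _)
    _ = (∑ i ∈ F, |w i|) * ‖v‖ := (Finset.sum_mul _ _ _).symm
  · have hsub : Summable (fun i : ((↑F : Set ℕ)ᶜ : Set ℕ) => w i.1 * T (basisv i.1)) :=
      hsummable.subtype _
    have hsubabs : Summable (fun i : ((↑F : Set ℕ)ᶜ : Set ℕ) => |w i.1 * T (basisv i.1)|) :=
      hsub.abs
    have hwabs : Summable (fun i : ((↑F : Set ℕ)ᶜ : Set ℕ) => |w i.1|) :=
      habs.summable.subtype _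
    calc |∑' i : ((↑F : Set ℕ)ᶜ : Set ℕ), w i.1 * T (basisv i.1)|
        ≤ ∑' i : ((↑F : Set ℕ)ᶜ : Set ℕ), |w i.1 * T (basisv i.1)| := by
          have := norm_tsum_le_tsum_norm
            (f := fun i : ((↑F : Set ℕ)ᶜ : Set ℕ) => w i.1 * T (basisv i.1))
            (by simpa only [Real.norm_eq_abs] using hsubabs)
          simpa only [Real.norm_eq_abs] using this
    _ ≤ ∑' i : ((↑F : Set ℕ)ᶜ : Set ℕ), |w i.1| * b := by
          refine Summable.tsum_le_tsum (fun i => ?_) hsubabs (hwabs.mul_right b)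
          rw [abs_mul]
          refine mul_le_mul_of_nonneg_left (hcib i.1 ?_) (abs_nonneg _)
          exact fun hmem => i.2 (Finset.mem_coe.mpr hmem)
    _ = (∑' i : ((↑F : Set ℕ)ᶜ : Set ℕ), |w i.1|) * b := tsum_mul_right
    _ ≤ ‖w‖ * b := by
          refine mul_le_mul_of_nonneg_right ?_ hb
          have hsplit2 := Summable.sum_add_tsum_compl (s := F) habs.summable
          rw [habs.tsum_eq] at hsplit2
          have hpos : 0 ≤ ∑ i ∈ F, |w i| := Finset.sum_nonneg fun i _ => abs_nonneg _
          linarith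
    _ = b * ‖w‖ := mul_comm _ _

theorem stmt3 (X : Type*) [NormedAddCommGroup X] [NormedSpace ℝ X] [CompleteSpace X]
    (e : StrongDual ℝ X ≃ₗᵢ[ℝ] ell1) (r : ℝ) (hr0 : 0 ≤ r) (hr1 : r < 1)
    (hlim : ∀ y : ell1,
      y ∈ @closure _ (wstar X e) ({z : ell1 | ∃ i, z = basisv i ∨ z = -basisv i} \ {y}) →
      ‖y‖ ≤ r)
    (x : ℕ → ell1) (xstar : ell1)
    (hws : ∀ v : X, Tendsto (fun n => (e.symm (x n)) v) atTop (𝓝 ((e.symm xstar) v)))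
    (hcoord : ∀ i : ℕ, Tendsto (fun n => x n i) atTop (𝓝 (0:ℝ))) :
    ‖xstar‖ ≤ r * Filter.liminf (fun n => ‖x n‖) atTop := by
  set L := Filter.liminf (fun n => ‖x n‖) atTop with hLdef
  obtain ⟨C, hC⟩ : ∃ C, ∀ n, ‖x n‖ ≤ C := by
    have hpt : ∀ v : X, ∃ C, ∀ n, ‖(e.symm (x n)) v‖ ≤ C := by
      intro v
      obtain ⟨C, hC⟩ := ((hws v).norm).bddAbove_range
      exact ⟨C, fun n => hC ⟨n, rfl⟩⟩
    obtain ⟨C, hC⟩ := banach_steinhaus (g := fun n => e.symm (x n)) hpt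
    refine ⟨C, fun n => ?_⟩
    have h := hC n
    rwa [e.symm.norm_map] at h
  have hbdd : IsBoundedUnder (· ≤ ·) atTop (fun n => ‖x n‖) :=
    isBoundedUnder_of ⟨C, hC⟩
  have hL0 : 0 ≤ L :=
    le_liminf_of_le hbdd.isCoboundedUnder_ge (Eventually.of_forall fun n => norm_nonneg _)
  have key : ∀ v : X, |(e.symm xstar) v| ≤ r * L * ‖v‖ := by
    intro v
    rw [show r * L * ‖v‖ = r * ‖v‖ * L by ring]
    refine le_of_forall_pos_le_add fun δ hδ => ?_
    set Cd : ℝ := 2*‖v‖ + L + 2 with hCd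
    have hCd0 : 0 < Cd := by
      have := norm_nonneg v
      rw [hCd]; linarith
    set ε := min 1 (δ / Cd) with hεdef
    have hε : 0 < ε := lt_min one_pos (div_pos hδ hCd0)
    have hε1 : ε ≤ 1 := min_le_left _ _
    have hεC : ε * Cd ≤ δ := by
      have h1 : ε ≤ δ / Cd := min_le_right _ _
      calc ε * Cd ≤ (δ / Cd) * Cd := mul_le_mul_of_nonneg_right h1 hCd0.le
      _ = δ := div_mul_cancel₀ _ hCd0.ne'
    set F := (claimA X e r hlim v ε hε).toFinset with hF
    have hFc : ∀ i ∉ F, |(e.symm (basisv i)) v| ≤ r*‖v‖+ε := by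
      intro i hi
      rw [hF, Set.Finite.mem_toFinset] at hi
      exact (not_le.mp hi).le
    have E1 : ∀ᶠ n in atTop, ∑ i ∈ F, |x n i| < ε := by
      have ht : Tendsto (fun n => ∑ i ∈ F, |x n i|) atTop (𝓝 0) := by
        have := tendsto_finset_sum F (fun i (_ : i ∈ F) => (hcoord i).abs)
        simpa using this
      exact ht.eventually_lt_const hε
    have E2 : ∀ᶠ n in atTop, |(e.symm (x n)) v - (e.symm xstar) v| < ε := by
      have ht : Tendsto (fun n => (e.symm (x n)) v - (e.symm xstar) v) atTop (𝓝 0) := by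
        simpa using (hws v).sub_const ((e.symm xstar) v)
      have ht2 := ht.abs
      simp only [abs_zero] at ht2
      exact ht2.eventually_lt_const hε
    have E3 : ∃ᶠ n in atTop, ‖x n‖ < L + ε := by
      refine frequently_lt_of_liminf_lt hbdd.isCoboundedUnder_ge ?_
      rw [← hLdef]
      linarith
    obtain ⟨n, hn3, hn1, hn2⟩ := (E3.and_eventually (E1.and E2)).exists
    have hb := bound_one X e v (x n) F (r*‖v‖+ε) hFc
    have hxv : |(e.symm xstar) v| ≤ |(e.symm (x n)) v| + ε := by
      have h1 := abs_sub_abs_le_abs_sub ((e.symm xstar) v) ((e.symm (x n)) v)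
      rw [abs_sub_comm] at h1
      linarith
    have hstep : |(e.symm (x n)) v| ≤ ε * ‖v‖ + (r*‖v‖+ε)*(L+ε) := by
      refine hb.trans (add_le_add ?_ ?_)
      · exact mul_le_mul_of_nonneg_right hn1.le (norm_nonneg v)
      · refine mul_le_mul_of_nonneg_left hn3.le ?_
        have := norm_nonneg v
        nlinarith
    have t1 : r*‖v‖*ε ≤ ‖v‖*ε :=
      mul_le_mul_of_nonneg_right (mul_le_of_le_one_left (norm_nonneg v) hr1.le) hε.le
    have t2 : ε*ε ≤ ε := mul_le_of_le_one_left hε.le hε1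
    have hεv : 0 ≤ ε * ‖v‖ := mul_nonneg hε.le (norm_nonneg v)
    have expand : ε*‖v‖ + (r*‖v‖+ε)*(L+ε) + ε ≤ r*‖v‖*L + ε*Cd := by
      rw [hCd]
      nlinarith [hε.le, norm_nonneg v, hL0]
    linarith
  have hnorm : ‖e.symm xstar‖ ≤ r * L := by
    refine ContinuousLinearMap.opNorm_le_bound _ (mul_nonneg hr0 hL0) fun v => ?_
    rw [Real.norm_eq_abs]
    exact key v
  calc ‖xstar‖ = ‖e.symm xstar‖ := (e.symm.norm_map xstar).symm
  _ ≤ r * L := hnorm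
end
end

section
/- Let $Y^*$ be a dual Banach space, $K \subset Y^*$ a convex $w^*$-compact set, and $T: K \to K$ a nonexpansive mapping. Then for every $x^* \in K$ there is a closed convex subset $H(x^*) \subset K$ invariant under $T$ such that (a) $\mathrm{diam}(H(x^*)) \le \sup_n \|x^* - T^n x^*\|$, and (b) $\sup_{y^* \in H(x^*)}\|x^* - y^*\| \le 2\sup_n \|x^* - T^n x^*\|$. -/
open Filter Topology ENNReal NormedSpace

noncomputable section

namespace Stmt5Aux

open Set

variable {Y : Type*} [NormedAddCommGroup Y] [NormedSpace ℝ Y]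

lemma wsDual_eq (Y : Type*) [NormedAddCommGroup Y] [NormedSpace ℝ Y] :
    wsDual Y = (instTopologicalSpaceWeakDual ℝ Y : TopologicalSpace (WeakDual ℝ Y)) := by
  unfold wsDual
  exact @induced_id (WeakDual ℝ Y) (instTopologicalSpaceWeakDual ℝ Y)

/-- Evaluation at a point is continuous for the weak-star topology. -/
lemma eval_cont (v : Y) :
    @Continuous _ _ (wsDual Y) _ (fun φ : StrongDual ℝ Y => φ v) := by
  rw [wsDual_eq]
  exact WeakDual.eval_continuous v

/-- The weak-star topology is Hausdorff. -/
lemma wsT2 : @T2Space (StrongDual ℝ Y) (wsDual Y) := by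
  rw [wsDual_eq]
  exact WeakDual.instT2Space

/-- The identity map from the norm topology to the weak-star topology is continuous. -/
lemma norm_cont_id :
    @Continuous (StrongDual ℝ Y) (StrongDual ℝ Y) _ (wsDual Y) id := by
  rw [wsDual_eq]
  exact NormedSpace.Dual.toWeakDual_continuous

/-- Weak-star closed sets are norm closed. -/
lemma wsClosed_isClosed {C : Set (StrongDual ℝ Y)}
    (h : @IsClosed _ (wsDual Y) C) : IsClosed C :=
  @IsClosed.preimage _ _ _ (wsDual Y) id norm_cont_id C h

lemma ball_convex (z : StrongDual ℝ Y) (c : ℝ) :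
    Convex ℝ {φ : StrongDual ℝ Y | ‖φ - z‖ ≤ c} := by
  have h : {φ : StrongDual ℝ Y | ‖φ - z‖ ≤ c} = Metric.closedBall z c := by
    ext φ
    simp [Metric.mem_closedBall, dist_eq_norm]
  rw [h]
  exact convex_closedBall z c

/-- Norm-closed balls are weak-star closed. -/
lemma ball_wsClosed (z : StrongDual ℝ Y) {c : ℝ} (hc : 0 ≤ c) :
    @IsClosed _ (wsDual Y) {φ : StrongDual ℝ Y | ‖φ - z‖ ≤ c} := by
  rw [wsDual_eq]
  show @IsClosed (WeakDual ℝ Y) _ {φ : StrongDual ℝ Y | ‖φ - z‖ ≤ c}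
  have h : {φ : StrongDual ℝ Y | ‖φ - z‖ ≤ c} =
      ⋂ v : Y, {φ : StrongDual ℝ Y | |φ v - z v| ≤ c * ‖v‖} := by
    ext φ
    simp only [Set.mem_setOf_eq, Set.mem_iInter]
    constructor
    · intro h v
      have h1 : ‖(φ - z) v‖ ≤ ‖φ - z‖ * ‖v‖ := (φ - z).le_opNorm v
      have h2 : (φ - z) v = φ v - z v := rfl
      have h3 : ‖φ - z‖ * ‖v‖ ≤ c * ‖v‖ :=
        mul_le_mul_of_nonneg_right h (norm_nonneg v)
      calc |φ v - z v| = ‖(φ - z) v‖ := by rw [h2, Real.norm_eq_abs]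
        _ ≤ ‖φ - z‖ * ‖v‖ := h1
        _ ≤ c * ‖v‖ := h3
    · intro h
      refine (φ - z).opNorm_le_bound hc fun v => ?_
      have h2 : (φ - z) v = φ v - z v := rfl
      calc ‖(φ - z) v‖ = |φ v - z v| := by rw [h2, Real.norm_eq_abs]
        _ ≤ c * ‖v‖ := h v
  refine Eq.subst (motive := fun s : Set (WeakDual ℝ Y) => IsClosed s) h.symm ?_
  refine isClosed_iInter fun v => ?_
  have hcont : Continuous (fun φ : WeakDual ℝ Y => |φ v - z v|) :=
    continuous_abs.comp ((WeakDual.eval_continuous v).sub continuous_const)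
  exact isClosed_le hcont continuous_const

/-- Closed convex hull with respect to the weak-star topology. -/
def cc (S : Set (StrongDual ℝ Y)) : Set (StrongDual ℝ Y) :=
  ⋂₀ {C | S ⊆ C ∧ Convex ℝ C ∧ @IsClosed _ (wsDual Y) C}

lemma subset_cc {S : Set (StrongDual ℝ Y)} : S ⊆ cc S :=
  fun _ hz C hC => hC.1 hz

lemma cc_min {S C : Set (StrongDual ℝ Y)} (h1 : S ⊆ C) (h2 : Convex ℝ C)
    (h3 : @IsClosed _ (wsDual Y) C) : cc S ⊆ C :=
  fun _ hz => hz C ⟨h1, h2, h3⟩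

lemma cc_convex {S : Set (StrongDual ℝ Y)} : Convex ℝ (cc S) :=
  convex_sInter fun _ hC => hC.2.1

lemma cc_closed {S : Set (StrongDual ℝ Y)} : @IsClosed _ (wsDual Y) (cc S) := by
  rw [wsDual_eq]
  show @IsClosed (WeakDual ℝ Y) _ (cc S)
  refine isClosed_sInter fun C hC => ?_
  have h := hC.2.2
  rw [wsDual_eq] at h
  exact h

lemma cc_mono {S S' : Set (StrongDual ℝ Y)} (h : S ⊆ S') : cc S ⊆ cc S' :=
  cc_min (h.trans subset_cc) cc_convex cc_closed

/-- Taking the weak-star closed convex hull does not increase the diameter. -/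
lemma cc_diam {S : Set (StrongDual ℝ Y)} {c : ℝ} (hc : 0 ≤ c)
    (h : ∀ a ∈ S, ∀ b ∈ S, ‖a - b‖ ≤ c) :
    ∀ a ∈ cc S, ∀ b ∈ cc S, ‖a - b‖ ≤ c := by
  have step1 : ∀ s ∈ S, cc S ⊆ {φ | ‖φ - s‖ ≤ c} := fun s hs =>
    cc_min (fun a ha => h a ha s hs) (ball_convex s c) (ball_wsClosed s hc)
  have step2 : ∀ b ∈ cc S, cc S ⊆ {φ | ‖φ - b‖ ≤ c} := by
    intro b hb
    refine cc_min (fun s hs => ?_) (ball_convex b c) (ball_wsClosed b hc)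
    have h1 := step1 s hs hb
    simpa only [Set.mem_setOf_eq, norm_sub_rev] using h1
  exact fun a ha b hb => step2 b hb ha

variable (T : StrongDual ℝ Y → StrongDual ℝ Y) (x : StrongDual ℝ Y)

/-- Iterated weak-star closed convex hulls of images of orbit tails. -/
def SS : ℕ → ℕ → Set (StrongDual ℝ Y)
  | 0, N => cc ((fun m => T^[m] x) '' Set.Ici N)
  | (k+1), N => cc (T '' SS k N)

end Stmt5Aux

theorem stmt5 (Y : Type*) [NormedAddCommGroup Y] [NormedSpace ℝ Y] [CompleteSpace Y]
    (K : Set (StrongDual ℝ Y)) (hconv : Convex ℝ K)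
    (hcpt : @IsCompact _ (wsDual Y) K)
    (T : StrongDual ℝ Y → StrongDual ℝ Y) (hT : Set.MapsTo T K K)
    (hnonexp : ∀ x ∈ K, ∀ y ∈ K, ‖T x - T y‖ ≤ ‖x - y‖) :
    ∀ x ∈ K, ∃ H : Set (StrongDual ℝ Y), H.Nonempty ∧ H ⊆ K ∧ IsClosed H ∧
      Convex ℝ H ∧ Set.MapsTo T H H ∧
      Metric.diam H ≤ ⨆ n : ℕ, ‖x - T^[n] x‖ ∧
      ∀ y ∈ H, ‖x - y‖ ≤ 2 * ⨆ n : ℕ, ‖x - T^[n] x‖ := by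
  intro x hx
  classical
  open Stmt5Aux in
  -- the orbit stays in K
  have horbK : ∀ n : ℕ, T^[n] x ∈ K := by
    intro n
    induction n with
    | zero => simpa using hx
    | succ n ih => rw [Function.iterate_succ_apply']; exact hT ih
  -- K is norm bounded (uniform boundedness principle)
  have hKbdd : ∃ C : ℝ, ∀ φ ∈ K, ‖φ‖ ≤ C := by
    have hpt : ∀ v : Y, ∃ C, ∀ i : K, ‖(i : StrongDual ℝ Y) v‖ ≤ C := by
      intro v
      have himage : IsCompact ((fun φ : StrongDual ℝ Y => φ v) '' K) :=
        @IsCompact.image _ _ (wsDual Y) _ K _ hcpt (Stmt5Aux.eval_cont v)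
      obtain ⟨C, hC⟩ := himage.isBounded.exists_norm_le
      exact ⟨C, fun i => hC _ ⟨(i : StrongDual ℝ Y), i.2, rfl⟩⟩
    obtain ⟨C, hC⟩ := banach_steinhaus hpt
    exact ⟨C, fun φ hφ => hC ⟨φ, hφ⟩⟩
  obtain ⟨C, hC⟩ := hKbdd
  set r := ⨆ n : ℕ, ‖x - T^[n] x‖ with hrdef
  have hbdd : BddAbove (Set.range fun n : ℕ => ‖x - T^[n] x‖) := by
    refine ⟨‖x‖ + C, ?_⟩
    rintro _ ⟨n, rfl⟩
    calc ‖x - T^[n] x‖ ≤ ‖x‖ + ‖T^[n] x‖ := norm_sub_le _ _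
      _ ≤ ‖x‖ + C := by
        have := hC _ (horbK n)
        linarith
  have hr : ∀ n : ℕ, ‖x - T^[n] x‖ ≤ r := fun n => le_ciSup hbdd n
  have hr0 : (0:ℝ) ≤ r := by
    have h0 := hr 0
    simpa using h0
  -- pairwise distances along the orbit are at most r
  have hpair : ∀ a b : ℕ, a ≤ b → ‖T^[a] x - T^[b] x‖ ≤ r := by
    intro a
    induction a with
    | zero => intro b _; simpa using hr b
    | succ a ih =>
      intro b hab
      obtain ⟨p, rfl⟩ : ∃ p, b = p + 1 := ⟨b - 1, by omega⟩
      have hap : a ≤ p := by omega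
      rw [Function.iterate_succ_apply', Function.iterate_succ_apply']
      exact le_trans (hnonexp _ (horbK a) _ (horbK p)) (ih p hap)
  have horb2 : ∀ i j : ℕ, ‖T^[i] x - T^[j] x‖ ≤ r := by
    intro i j
    rcases le_total i j with h | h
    · exact hpair i j h
    · rw [norm_sub_rev]; exact hpair j i h
  have hT2 := Stmt5Aux.wsT2 (Y := Y)
  have hKcl : @IsClosed _ (wsDual Y) K := @IsCompact.isClosed _ (wsDual Y) hT2 K hcpt
  have hKcln : IsClosed K := Stmt5Aux.wsClosed_isClosed hKcl
  -- properties of the sets SS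
  have hSSsub : ∀ k N, Stmt5Aux.SS T x k N ⊆ K := by
    intro k
    induction k with
    | zero =>
      intro N
      simp only [Stmt5Aux.SS]
      refine Stmt5Aux.cc_min ?_ hconv hKcl
      rintro _ ⟨m, _, rfl⟩
      exact horbK m
    | succ k ih =>
      intro N
      simp only [Stmt5Aux.SS]
      refine Stmt5Aux.cc_min ?_ hconv hKcl
      rintro _ ⟨z, hz, rfl⟩
      exact hT (ih N hz)
  have hmem : ∀ k N m, N + k ≤ m → T^[m] x ∈ Stmt5Aux.SS T x k N := by
    intro k
    induction k with
    | zero =>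
      intro N m hm
      simp only [Stmt5Aux.SS]
      exact Stmt5Aux.subset_cc ⟨m, by simpa using hm, rfl⟩
    | succ k ih =>
      intro N m hm
      obtain ⟨p, rfl⟩ : ∃ p, m = p + 1 := ⟨m - 1, by omega⟩
      simp only [Stmt5Aux.SS]
      rw [Function.iterate_succ_apply']
      exact Stmt5Aux.subset_cc ⟨T^[p] x, ih N p (by omega), rfl⟩
  have hSSdiam : ∀ k N, ∀ a ∈ Stmt5Aux.SS T x k N, ∀ b ∈ Stmt5Aux.SS T x k N,
      ‖a - b‖ ≤ r := by
    intro k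
    induction k with
    | zero =>
      intro N
      simp only [Stmt5Aux.SS]
      refine Stmt5Aux.cc_diam hr0 ?_
      rintro _ ⟨i, _, rfl⟩ _ ⟨j, _, rfl⟩
      exact horb2 i j
    | succ k ih =>
      intro N
      simp only [Stmt5Aux.SS]
      refine Stmt5Aux.cc_diam hr0 ?_
      rintro _ ⟨a, ha, rfl⟩ _ ⟨b, hb, rfl⟩
      exact le_trans (hnonexp _ (hSSsub k N ha) _ (hSSsub k N hb)) (ih N a ha b hb)
  have hSSconv : ∀ k N, Convex ℝ (Stmt5Aux.SS T x k N) := by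
    intro k N
    cases k <;> simp only [Stmt5Aux.SS] <;> exact Stmt5Aux.cc_convex
  have hSScl : ∀ k N, @IsClosed _ (wsDual Y) (Stmt5Aux.SS T x k N) := by
    intro k N
    cases k <;> simp only [Stmt5Aux.SS] <;> exact Stmt5Aux.cc_closed
  have hSSne : ∀ k N, (Stmt5Aux.SS T x k N).Nonempty :=
    fun k N => ⟨T^[N + k] x, hmem k N _ le_rfl⟩
  have hSSdec : ∀ k N, Stmt5Aux.SS T x k (N + 1) ⊆ Stmt5Aux.SS T x k N := by
    intro k
    induction k with
    | zero =>
      intro N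
      simp only [Stmt5Aux.SS]
      exact Stmt5Aux.cc_mono
        (Set.image_mono (Set.Ici_subset_Ici.2 (Nat.le_succ N)))
    | succ k ih =>
      intro N
      simp only [Stmt5Aux.SS]
      exact Stmt5Aux.cc_mono (Set.image_mono (ih N))
  have hSScpt : ∀ k N, @IsCompact _ (wsDual Y) (Stmt5Aux.SS T x k N) := by
    intro k N
    exact @IsCompact.of_isClosed_subset _ (wsDual Y) _ _ hcpt (hSScl k N) (hSSsub k N)
  -- the asymptotic sets AA
  set AA : ℕ → Set (StrongDual ℝ Y) := fun k => ⋂ N, Stmt5Aux.SS T x k N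
    with hAAdef
  have hAA0ne : (AA 0).Nonempty := by
    refine @IsCompact.nonempty_iInter_of_sequence_nonempty_isCompact_isClosed _
      (wsDual Y) (fun N => Stmt5Aux.SS T x 0 N) (hSSdec 0) (fun N => hSSne 0 N)
      (hSScpt 0 0) (fun N => hSScl 0 N)
  have hL6 : ∀ k N, Stmt5Aux.SS T x 0 (N + k) ⊆ Stmt5Aux.SS T x k N := by
    intro k
    induction k with
    | zero => intro N; simp
    | succ k ih =>
      intro N
      simp only [Stmt5Aux.SS]
      refine Stmt5Aux.cc_min ?_ Stmt5Aux.cc_convex Stmt5Aux.cc_closed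
      rintro _ ⟨m, hm, rfl⟩
      have hm' : N + (k + 1) ≤ m := by simpa using hm
      obtain ⟨p, rfl⟩ : ∃ p, m = p + 1 := ⟨m - 1, by omega⟩
      show T^[p+1] x ∈ Stmt5Aux.cc (T '' Stmt5Aux.SS T x k N)
      rw [Function.iterate_succ_apply']
      exact Stmt5Aux.subset_cc ⟨T^[p] x, hmem k N p (by omega), rfl⟩
  have hAA0sub : ∀ j, AA 0 ⊆ AA j := by
    intro j z hz
    refine Set.mem_iInter.2 fun N => hL6 j N ?_
    exact Set.mem_iInter.1 hz (N + j)
  have hAAT : ∀ k, ∀ z ∈ AA k, T z ∈ AA (k + 1) := by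
    intro k z hz
    refine Set.mem_iInter.2 fun N => ?_
    simp only [Stmt5Aux.SS]
    exact Stmt5Aux.subset_cc ⟨z, Set.mem_iInter.1 hz N, rfl⟩
  have hAAdiam : ∀ k, ∀ a ∈ AA k, ∀ b ∈ AA k, ‖a - b‖ ≤ r := fun k a ha b hb =>
    hSSdiam k 0 a (Set.mem_iInter.1 ha 0) b (Set.mem_iInter.1 hb 0)
  have hAAsub : ∀ k, AA k ⊆ K := fun k z hz => hSSsub k 0 (Set.mem_iInter.1 hz 0)
  have hAAconv : ∀ k, Convex ℝ (AA k) := fun k => convex_iInter fun N => hSSconv k N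
  -- the increasing sets BB
  set BB : ℕ → Set (StrongDual ℝ Y) :=
    fun k => ⋂ j, ⋂ (_ : k ≤ j), AA j with hBBdef
  have hBBmono : ∀ k k', k ≤ k' → BB k ⊆ BB k' := fun k k' hk z hz =>
    Set.mem_iInter₂.2 fun j hj => Set.mem_iInter₂.1 hz j (le_trans hk hj)
  have hBB0 : ∀ k, AA 0 ⊆ BB k := fun k z hz =>
    Set.mem_iInter₂.2 fun j _ => hAA0sub j hz
  have hBBT : ∀ k, ∀ z ∈ BB k, T z ∈ BB (k + 1) := by
    intro k z hz
    refine Set.mem_iInter₂.2 fun j hj => ?_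
    obtain ⟨p, rfl⟩ : ∃ p, j = p + 1 := ⟨j - 1, by omega⟩
    exact hAAT p z (Set.mem_iInter₂.1 hz p (by omega))
  have hBBdiam : ∀ k, ∀ a ∈ BB k, ∀ b ∈ BB k, ‖a - b‖ ≤ r := fun k a ha b hb =>
    hAAdiam k a (Set.mem_iInter₂.1 ha k le_rfl) b (Set.mem_iInter₂.1 hb k le_rfl)
  have hBBsub : ∀ k, BB k ⊆ K := fun k z hz =>
    hAAsub k (Set.mem_iInter₂.1 hz k le_rfl)
  have hBBconv : ∀ k, Convex ℝ (BB k) := fun k =>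
    convex_iInter fun j => convex_iInter fun _ => hAAconv j
  -- the union U and its closure H
  set U : Set (StrongDual ℝ Y) := ⋃ k, BB k with hUdef
  have hUconv : Convex ℝ U := by
    intro a ha b hb p q hp hq hpq
    obtain ⟨k1, hk1⟩ := Set.mem_iUnion.1 ha
    obtain ⟨k2, hk2⟩ := Set.mem_iUnion.1 hb
    refine Set.mem_iUnion.2 ⟨max k1 k2, ?_⟩
    exact hBBconv _ (hBBmono _ _ (le_max_left _ _) hk1)
      (hBBmono _ _ (le_max_right _ _) hk2) hp hq hpq
  have hUsub : U ⊆ K := Set.iUnion_subset hBBsub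
  have hUne : U.Nonempty := by
    obtain ⟨a, ha⟩ := hAA0ne
    exact ⟨a, Set.mem_iUnion.2 ⟨0, hBB0 0 ha⟩⟩
  have hUdiam : ∀ a ∈ U, ∀ b ∈ U, ‖a - b‖ ≤ r := by
    intro a ha b hb
    obtain ⟨k1, hk1⟩ := Set.mem_iUnion.1 ha
    obtain ⟨k2, hk2⟩ := Set.mem_iUnion.1 hb
    exact hBBdiam (max k1 k2) a (hBBmono _ _ (le_max_left _ _) hk1)
      b (hBBmono _ _ (le_max_right _ _) hk2)
  have hUT : ∀ z ∈ U, T z ∈ U := by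
    intro z hz
    obtain ⟨k, hk⟩ := Set.mem_iUnion.1 hz
    exact Set.mem_iUnion.2 ⟨k + 1, hBBT k z hk⟩
  refine ⟨closure U, hUne.mono subset_closure, closure_minimal hUsub hKcln,
    isClosed_closure, hUconv.closure, ?_, ?_, ?_⟩
  · -- MapsTo
    intro y hy
    have hyK : y ∈ K := closure_minimal hUsub hKcln hy
    rw [Metric.mem_closure_iff] at hy ⊢
    intro ε hε
    obtain ⟨u, hu, hdu⟩ := hy ε hε
    refine ⟨T u, hUT u hu, lt_of_le_of_lt ?_ hdu⟩
    rw [dist_eq_norm, dist_eq_norm]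
    exact hnonexp y hyK u (hUsub hu)
  · -- diameter
    rw [Metric.diam_closure]
    refine Metric.diam_le_of_forall_dist_le hr0 fun a ha b hb => ?_
    rw [dist_eq_norm]
    exact hUdiam a ha b hb
  · -- distance to x
    intro y hy
    obtain ⟨a0, ha0⟩ := hAA0ne
    have hxa0 : ‖x - a0‖ ≤ r := by
      have h2 : Stmt5Aux.SS T x 0 0 ⊆ {φ : StrongDual ℝ Y | ‖φ - x‖ ≤ r} := by
        simp only [Stmt5Aux.SS]
        refine Stmt5Aux.cc_min ?_ (Stmt5Aux.ball_convex x r) (Stmt5Aux.ball_wsClosed x hr0)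
        rintro _ ⟨m, _, rfl⟩
        simpa only [Set.mem_setOf_eq, norm_sub_rev] using hr m
      have h3 := h2 (Set.mem_iInter.1 ha0 0)
      simpa only [Set.mem_setOf_eq, norm_sub_rev] using h3
    refine le_of_forall_pos_le_add fun ε hε => ?_
    rw [Metric.mem_closure_iff] at hy
    obtain ⟨u, hu, hdu⟩ := hy ε hε
    obtain ⟨k, hk⟩ := Set.mem_iUnion.1 hu
    have hua0 : ‖u - a0‖ ≤ r := hBBdiam k u hk a0 (hBB0 k ha0)
    have hyu : ‖u - y‖ ≤ ε := by
      rw [dist_eq_norm] at hdu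
      rw [norm_sub_rev]
      exact le_of_lt hdu
    calc ‖x - y‖ = ‖(x - a0) + (a0 - u) + (u - y)‖ := by
          rw [sub_add_sub_cancel, sub_add_sub_cancel]
      _ ≤ ‖(x - a0) + (a0 - u)‖ + ‖u - y‖ := norm_add_le _ _
      _ ≤ ‖x - a0‖ + ‖a0 - u‖ + ‖u - y‖ := by
          have := norm_add_le (x - a0) (a0 - u)
          linarith
      _ ≤ r + r + ε := by
          rw [norm_sub_rev] at hua0
          linarith
      _ = 2 * r + ε := by ring
end
end

section
/- Let $T: \ell_1 \to \ell_1$ be the shift-type operator defined on the closed span $Z$ of $\{e^*, e_{n_1}^*, e_{n_2}^*, \ldots\}$ by $T(t_0 e^* + \sum_{j=1}^\infty t_j e_{n_j}^*) = \sum_{j=1}^\infty t_{j-1} e_{n_j}^*$, where $\sum_{j=1}^\infty |e^*(n_j)| < \frac{1}{4}\|e^*\|$ and $e^* \neq 0$. Then $T$ is well-defined and linear, and the restriction of $T$ to the set $K = \{\alpha_0 e^* + \sum_{k\ge1}\alpha_k e_{n_k}^* : \alpha_i \ge 0, \sum\alpha_i = 1\}$ maps $K$ into $K$ and has no fixed point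 in $K$. -/
open Filter Topology ENNReal NormedSpace

noncomputable section

namespace Stmt12Aux

lemma basisv_apply_self (i : ℕ) : (basisv i) i = 1 := lp.single_apply_self _ _ _

lemma basisv_apply_ne {i j : ℕ} (h : j ≠ i) : (basisv i) j = 0 := lp.single_apply_ne _ _ _ h

lemma norm_basisv (i : ℕ) : ‖basisv i‖ = 1 := by
  have := lp.norm_single (E := fun _ : ℕ => ℝ) (p := 1) (by simp) i (1:ℝ)
  simpa [basisv] using this

lemma coord_smul (c : ℝ) (v : ell1) (m : ℕ) : (c • v) m = c * v m := by
  rw [lp.coeFn_smul]; rfl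

lemma coord_add (u v : ell1) (m : ℕ) : (u + v) m = u m + v m := by
  rw [lp.coeFn_add]; rfl

def ev (m : ℕ) : ell1 →L[ℝ] ℝ :=
  LinearMap.mkContinuous
    { toFun := fun x => x m
      map_add' := fun x y => coord_add x y m
      map_smul' := fun c x => coord_smul c x m }
    1 (fun x => by simpa using lp.norm_apply_le_norm one_ne_zero x m)

lemma hasSum_abs (x : ell1) : HasSum (fun i => |x i|) ‖x‖ := by
  have := lp.hasSum_norm (E := fun _ : ℕ => ℝ) (p := 1) (by simp) x
  simpa using this

lemma summable_abs (x : ell1) : Summable fun i => |x i| := (hasSum_abs x).summable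

lemma summable_smul_basisv {n : ℕ → ℕ} {a : ℕ → ℝ} (ha : Summable fun j => |a j|) :
    Summable fun k => a k • basisv (n k) := by
  refine Summable.of_norm ?_
  simpa [norm_smul, norm_basisv] using ha

lemma coord_tsum_apply {n : ℕ → ℕ} {a : ℕ → ℝ} (ha : Summable fun j => |a j|) (m : ℕ) :
    (∑' k, a k • basisv (n k)) m = ∑' k, a k * (basisv (n k)) m := by
  have h := ContinuousLinearMap.map_tsum (ev m) (summable_smul_basisv (n := n) ha)
  have hev : ∀ y : ell1, ev m y = y m := fun _ => rfl
  calc (∑' k, a k • basisv (n k)) m = ev m (∑' k, a k • basisv (n k)) := rfl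
    _ = ∑' k, ev m (a k • basisv (n k)) := h
    _ = ∑' k, a k * (basisv (n k)) m := tsum_congr fun k => coord_smul _ _ _

lemma coord_tsum_eq {n : ℕ → ℕ} (hninj : Function.Injective n) {a : ℕ → ℝ}
    (ha : Summable fun j => |a j|) (j : ℕ) :
    (∑' k, a k • basisv (n k)) (n j) = a j := by
  rw [coord_tsum_apply ha]
  rw [tsum_eq_single j]
  · rw [basisv_apply_self, mul_one]
  · intro k hk
    rw [basisv_apply_ne (fun e => hk ((hninj e).symm)), mul_zero]

lemma coord_tsum_not_mem {n : ℕ → ℕ} {a : ℕ → ℝ} (ha : Summable fun j => |a j|)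
    {m : ℕ} (hm : m ∉ Set.range n) :
    (∑' k, a k • basisv (n k)) m = 0 := by
  rw [coord_tsum_apply ha]
  have h : ∀ k, (basisv (n k)) m = 0 := fun k => basisv_apply_ne (fun e => hm ⟨k, e.symm⟩)
  simp [h]

def ccF (estar : ell1) (n : ℕ → ℕ) (m0 : ℕ) (x : ell1) : ℕ → ℝ :=
  fun k => Nat.casesOn k (x m0 * (estar m0)⁻¹)
    fun j => x (n j) - x m0 * (estar m0)⁻¹ * estar (n j)

@[simp] lemma ccF_zero (estar : ell1) (n : ℕ → ℕ) (m0 : ℕ) (x : ell1) :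
    ccF estar n m0 x 0 = x m0 * (estar m0)⁻¹ := rfl

@[simp] lemma ccF_succ (estar : ell1) (n : ℕ → ℕ) (m0 : ℕ) (x : ell1) (j : ℕ) :
    ccF estar n m0 x (j + 1) = x (n j) - x m0 * (estar m0)⁻¹ * estar (n j) := rfl

lemma ccF_summable (estar : ell1) {n : ℕ → ℕ} (hninj : Function.Injective n) (m0 : ℕ)
    (x : ell1) : Summable fun k => |ccF estar n m0 x k| := by
  apply (summable_nat_add_iff 1).mp
  have h1 : Summable fun k => |x (n k)| := (summable_abs x).comp_injective hninj
  have h2 : Summable fun k => |x m0 * (estar m0)⁻¹| * |estar (n k)| :=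
    ((summable_abs estar).comp_injective hninj).mul_left _
  refine Summable.of_nonneg_of_le (fun k => abs_nonneg _) (fun k => ?_) (h1.add h2)
  show |x (n k) - x m0 * (estar m0)⁻¹ * estar (n k)| ≤ _
  calc |x (n k) - x m0 * (estar m0)⁻¹ * estar (n k)|
      ≤ |x (n k)| + |x m0 * (estar m0)⁻¹ * estar (n k)| := abs_sub _ _
    _ = |x (n k)| + |x m0 * (estar m0)⁻¹| * |estar (n k)| := by rw [abs_mul]

def TF (estar : ell1) (n : ℕ → ℕ) (hninj : Function.Injective n) (m0 : ℕ) :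
    ell1 →ₗ[ℝ] ell1 where
  toFun x := ∑' k, ccF estar n m0 x k • basisv (n k)
  map_add' x y := by
    have hc : ∀ k, ccF estar n m0 (x + y) k
        = ccF estar n m0 x k + ccF estar n m0 y k := by
      intro k
      cases k with
      | zero => simp only [ccF_zero, coord_add]; ring
      | succ j => simp only [ccF_succ, coord_add]; ring
    simp only [hc, add_smul]
    exact Summable.tsum_add (summable_smul_basisv (ccF_summable estar hninj m0 x))
      (summable_smul_basisv (ccF_summable estar hninj m0 y))
  map_smul' r x := by
    have hc : ∀ k, ccF estar n m0 (r • x) k = r * ccF estar n m0 x k := by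
      intro k
      cases k with
      | zero => simp only [ccF_zero, coord_smul]; ring
      | succ j => simp only [ccF_succ, coord_smul]; ring
    simp only [hc, RingHom.id_apply, ← smul_smul]
    exact Summable.tsum_const_smul r (summable_smul_basisv (ccF_summable estar hninj m0 x))

lemma TF_apply (estar : ell1) (n : ℕ → ℕ) (hninj : Function.Injective n) (m0 : ℕ)
    (x : ell1) : TF estar n hninj m0 x = ∑' k, ccF estar n m0 x k • basisv (n k) := rfl

lemma key (estar : ell1) {n : ℕ → ℕ} (hninj : Function.Injective n) {m0 : ℕ}
    (hm0r : m0 ∉ Set.range n) (hm0 : estar m0 ≠ 0) (t : ℕ → ℝ)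
    (ht : Summable fun j => |t j|) :
    ∀ k, ccF estar n m0 (t 0 • estar + ∑' k, t (k + 1) • basisv (n k)) k = t k := by
  have ht' : Summable fun j => |t (j + 1)| := (summable_nat_add_iff 1).mpr ht
  set w := ∑' k, t (k + 1) • basisv (n k) with hw
  have hx0 : (t 0 • estar + w) m0 = t 0 * estar m0 := by
    rw [coord_add, coord_smul, hw, coord_tsum_not_mem ht' hm0r, add_zero]
  intro k
  cases k with
  | zero =>
      rw [ccF_zero, hx0, mul_assoc, mul_inv_cancel₀ hm0, mul_one]
  | succ j =>
      rw [ccF_succ, coord_add, coord_smul, hw, coord_tsum_eq hninj ht' j, hx0]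
      field_simp
      ring

end Stmt12Aux

set_option maxHeartbeats 1000000 in
open Stmt12Aux in
theorem stmt12 (estar : ell1) (h0 : estar ≠ 0) (n : ℕ → ℕ) (hn : StrictMono n)
    (hsmall : ∑' j, |estar (n j)| < ‖estar‖ / 4) :
    let Z : Submodule ℝ ell1 :=
      (Submodule.span ℝ ({estar} ∪ Set.range fun j => basisv (n j))).topologicalClosure
    let K : Set ell1 := {x | ∃ a : ℕ → ℝ, (∀ i, 0 ≤ a i) ∧ Summable a ∧ (∑' i, a i) = 1 ∧
      x = a 0 • estar + ∑' k, a (k + 1) • basisv (n k)}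
    (∀ t s : ℕ → ℝ, Summable (fun j => |t j|) → Summable (fun j => |s j|) →
      t 0 • estar + ∑' k, t (k + 1) • basisv (n k) =
        s 0 • estar + ∑' k, s (k + 1) • basisv (n k) → t = s) ∧
    ∃ T : Z →ₗ[ℝ] ell1,
      (∀ t : ℕ → ℝ, Summable (fun j => |t j|) →
        ∀ h : t 0 • estar + ∑' k, t (k + 1) • basisv (n k) ∈ Z,
          T ⟨t 0 • estar + ∑' k, t (k + 1) • basisv (n k), h⟩ = ∑' k, t k • basisv (n k)) ∧
      (∀ x, ∀ hx : x ∈ K, ∃ hz : x ∈ Z, T ⟨x, hz⟩ ∈ K ∧ T ⟨x, hz⟩ ≠ x) := by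
  intro Z K
  have hninj : Function.Injective n := hn.injective
  have hpos : (0:ℝ) < ‖estar‖ := norm_pos_iff.mpr h0
  obtain ⟨m0, hm0r, hm0⟩ : ∃ m0, m0 ∉ Set.range n ∧ estar m0 ≠ 0 := by
    by_contra hcon
    push_neg at hcon
    have hnormeq : ‖estar‖ = ∑' m, |estar m| := (hasSum_abs estar).tsum_eq.symm
    have heq : ∑' j, |estar (n j)| = ∑' m, |estar m| := by
      refine Function.Injective.tsum_eq (f := fun m => |estar m|) hninj ?_
      intro m hm
      by_contra hmr
      exact hm (by simp [hcon m hmr])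
    rw [heq, ← hnormeq] at hsmall
    linarith
  -- uniqueness
  have uniq : ∀ t s : ℕ → ℝ, Summable (fun j => |t j|) → Summable (fun j => |s j|) →
      t 0 • estar + ∑' k, t (k + 1) • basisv (n k) =
        s 0 • estar + ∑' k, s (k + 1) • basisv (n k) → t = s := by
    intro t s ht hs h
    funext k
    have h1 := key estar hninj hm0r hm0 t ht k
    have h2 := key estar hninj hm0r hm0 s hs k
    rw [h] at h1
    exact h1.symm.trans h2
  refine ⟨uniq, (TF estar n hninj m0).comp Z.subtype, ?_, ?_⟩
  · intro t ht h
    simp only [LinearMap.comp_apply, Submodule.subtype_apply]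
    rw [TF_apply]
    exact tsum_congr fun k => by rw [key estar hninj hm0r hm0 t ht k]
  · intro x hx
    obtain ⟨a, ha0, hasum, hsum1, hxeq⟩ := id hx
    have habs : Summable fun j => |a j| := by
      have he : (fun j => |a j|) = a := funext fun i => abs_of_nonneg (ha0 i)
      rw [he]; exact hasum
    have habs' : Summable fun j => |a (j + 1)| := (summable_nat_add_iff 1).mpr habs
    -- x ∈ Z
    have hspan : Submodule.span ℝ ({estar} ∪ Set.range fun j => basisv (n j)) ≤ Z :=
      Submodule.le_topologicalClosure _
    have hcl : IsClosed (Z : Set ell1) := Submodule.isClosed_topologicalClosure _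
    have hzmem : x ∈ Z := by
      rw [hxeq]
      refine Submodule.add_mem _ (Submodule.smul_mem _ _
        (hspan (Submodule.subset_span (Or.inl rfl)))) ?_
      refine hcl.mem_of_tendsto (summable_smul_basisv habs').hasSum
        (Filter.Eventually.of_forall fun s => ?_)
      exact Submodule.sum_mem _ fun k _ => Submodule.smul_mem _ _
        (hspan (Submodule.subset_span (Or.inr ⟨k, rfl⟩)))
    have hccx : ∀ k, ccF estar n m0 x k = a k := by
      intro k
      rw [hxeq]
      exact key estar hninj hm0r hm0 a habs k
    have hTx : (TF estar n hninj m0) x = ∑' k, a k • basisv (n k) := by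
      rw [TF_apply]
      exact tsum_congr fun k => by rw [hccx k]
    set a' : ℕ → ℝ := fun i => Nat.casesOn i 0 (fun j => a j) with ha'def
    have ha'sum : Summable a' := by
      apply (summable_nat_add_iff 1).mp
      exact hasum
    have hTx' : (TF estar n hninj m0) x
        = a' 0 • estar + ∑' k, a' (k + 1) • basisv (n k) := by
      rw [hTx]
      show _ = (0:ℝ) • estar + ∑' k, a k • basisv (n k)
      rw [zero_smul, zero_add]
    refine ⟨hzmem, ?_, ?_⟩
    · -- membership in K
      show _ ∈ K
      simp only [LinearMap.comp_apply, Submodule.subtype_apply]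
      refine ⟨a', fun i => ?_, ha'sum, ?_, hTx'⟩
      · cases i with
        | zero => exact le_refl 0
        | succ j => exact ha0 j
      · rw [Summable.tsum_eq_zero_add ha'sum]
        show (0:ℝ) + ∑' i, a i = 1
        rw [zero_add]
        exact hsum1
    · -- no fixed point
      simp only [LinearMap.comp_apply, Submodule.subtype_apply]
      intro he
      have ha'abs : Summable fun j => |a' j| := by
        apply (summable_nat_add_iff 1).mp
        show Summable fun j => |a j|
        exact habs
      have ha'eq : a' = a := by
        refine uniq a' a ha'abs habs ?_
        calc a' 0 • estar + ∑' k, a' (k + 1) • basisv (n k)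
            = (TF estar n hninj m0) x := hTx'.symm
          _ = x := he
          _ = a 0 • estar + ∑' k, a (k + 1) • basisv (n k) := hxeq
      have hzero : ∀ k, a k = 0 := by
        intro k
        induction k with
        | zero => exact (congrFun ha'eq 0).symm
        | succ j ih =>
            have := congrFun ha'eq (j + 1)
            show a (j + 1) = 0
            rw [← this]
            show a j = 0
            exact ih
      rw [show a = fun _ => (0:ℝ) from funext hzero] at hsum1
      simp at hsum1
end
end

section
/- Let $X$ be a Lindenstrauss space. If $x^*(x) < 1$ for every $x \in S_X$ and every $w^*$-limit point $x^*$ of $\mathrm{ext}\,B_{X^*}$ (property (pol-v)), then $\sup\{x^*(x) : x^* \in \mathrm{ext}\,B_{X^*} \setminus D(x)\} < 1$ for each $x \in S_X$ (property (pol-vii)). -/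
open Filter Topology ENNReal NormedSpace

noncomputable section

theorem stmt16 (X : Type*) [NormedAddCommGroup X] [NormedSpace ℝ X] [CompleteSpace X]
    (Ω : Type*) [MeasurableSpace Ω] (μ : MeasureTheory.Measure Ω)
    (e : StrongDual ℝ X ≃ₗᵢ[ℝ] MeasureTheory.Lp ℝ 1 μ)
    (hpolv : ∀ x : X, ‖x‖ = 1 → ∀ φ : StrongDual ℝ X,
      φ ∈ @closure _ (wsDual X)
        (Set.extremePoints ℝ (Metric.closedBall (0 : StrongDual ℝ X) 1) \ {φ}) →
      φ x < 1) :
    ∀ x : X, ‖x‖ = 1 → ∃ c : ℝ, c < 1 ∧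
      ∀ φ ∈ Set.extremePoints ℝ (Metric.closedBall (0 : StrongDual ℝ X) 1),
        ¬(‖φ‖ = 1 ∧ φ x = 1) → φ x ≤ c := by
  intro x hx
  by_contra hcon
  push_neg at hcon
  set E := Set.extremePoints ℝ (Metric.closedBall (0 : StrongDual ℝ X) 1) with hE
  have key : ∀ φ ∈ E, (‖φ‖ = 1 → φ x ≠ 1) → φ x < 1 := by
    intro φ hφE hφn
    have hball : φ ∈ Metric.closedBall (0 : StrongDual ℝ X) 1 := hφE.1
    have hnorm : ‖φ‖ ≤ 1 := by simpa using hball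
    have hle : φ x ≤ 1 := by
      calc φ x ≤ ‖φ x‖ := le_abs_self _
        _ ≤ ‖φ‖ * ‖x‖ := φ.le_opNorm x
        _ ≤ 1 := by rw [hx]; simpa using hnorm
    rcases lt_or_eq_of_le hle with h | h
    · exact h
    · exfalso
      have h1 : (1:ℝ) ≤ ‖φ‖ := by
        calc (1:ℝ) = φ x := h.symm
          _ ≤ ‖φ x‖ := le_abs_self _
          _ ≤ ‖φ‖ * ‖x‖ := φ.le_opNorm x
          _ = ‖φ‖ := by rw [hx, mul_one]
      exact hφn (le_antisymm hnorm h1) h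
  have hseq : ∀ n : ℕ, ∃ φ : StrongDual ℝ X,
      φ ∈ E ∧ φ x < 1 ∧ 1 - 1/(n+1) < φ x := by
    intro n
    obtain ⟨φ, hφE, hφn, hc⟩ := hcon (1 - 1/(n+1)) (by
      have : (0:ℝ) < 1/(n+1) := by positivity
      linarith)
    exact ⟨φ, hφE, key φ hφE hφn, hc⟩
  choose φ hφE hφlt hφgt using hseq
  set ψ : ℕ → WeakDual ℝ X := fun n => StrongDual.toWeakDual (φ n) with hψ
  have hK : IsCompact (WeakDual.toStrongDual ⁻¹' Metric.closedBall (0 : StrongDual ℝ X) 1) :=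
    WeakDual.isCompact_closedBall (0 : StrongDual ℝ X) 1
  have hle : Filter.map ψ atTop ≤
      𝓟 (WeakDual.toStrongDual ⁻¹' Metric.closedBall (0 : StrongDual ℝ X) 1) := by
    refine Filter.le_principal_iff.mpr (Filter.mem_map.mpr ?_)
    exact Filter.Eventually.of_forall fun n => (hφE n).1
  obtain ⟨y, hyK, hy⟩ := hK.exists_clusterPt hle
  have heval : ClusterPt (y x) (Filter.map (fun n => φ n x) atTop) := by
    have hc : ContinuousAt (fun ψ : WeakDual ℝ X => ψ x) y :=
      (WeakDual.eval_continuous x).continuousAt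
    have := hy.map hc (Filter.map_map.le)
    exact this
  have htends : Filter.map (fun n : ℕ => φ n x) atTop ≤ 𝓝 (1:ℝ) := by
    refine tendsto_of_tendsto_of_tendsto_of_le_of_le (g := fun n : ℕ => 1 - 1/((n:ℝ)+1))
      ?_ (tendsto_const_nhds (x := (1:ℝ))) (fun n => (hφgt n).le) (fun n => (hφlt n).le)
    have h0 : Tendsto (fun n : ℕ => 1/((n:ℝ)+1)) atTop (𝓝 0) :=
      tendsto_one_div_add_atTop_nhds_zero_nat
    simpa using (tendsto_const_nhds (x := (1:ℝ))).sub h0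
  have hyx : y x = 1 := eq_of_nhds_neBot (heval.mono htends)
  set ψ₀ : StrongDual ℝ X := WeakDual.toStrongDual y with hψ₀
  have hψ₀x : ψ₀ x = 1 := hyx
  have hne : ∀ n, φ n ≠ ψ₀ := fun n h => by
    have := hφlt n; rw [h, hψ₀x] at this; exact lt_irrefl _ this
  have htop : wsDual X = ((instTopologicalSpaceWeakDual ℝ X) : TopologicalSpace (WeakDual ℝ X)) :=
    @induced_id (WeakDual ℝ X) (instTopologicalSpaceWeakDual ℝ X)
  have hclmem : y ∈ @closure (WeakDual ℝ X) (instTopologicalSpaceWeakDual ℝ X)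
      ((E \ {ψ₀} : Set (StrongDual ℝ X)) : Set (WeakDual ℝ X)) := by
    refine mem_closure_iff_clusterPt.mpr (hy.mono ?_)
    refine Filter.le_principal_iff.mpr (Filter.mem_map.mpr ?_)
    exact Filter.Eventually.of_forall fun n => ⟨hφE n, hne n⟩
  have hceq := congrArg
    (fun t : TopologicalSpace (WeakDual ℝ X) =>
      @closure _ t ((E \ {ψ₀} : Set (StrongDual ℝ X)) : Set (WeakDual ℝ X))) htop
  have hcl : ψ₀ ∈ @closure _ (wsDual X) (E \ {ψ₀}) := by
    rw [show @closure _ (wsDual X) (E \ {ψ₀}) = _ from hceq]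
    exact hclmem
  have := hpolv x hx ψ₀ hcl
  rw [hψ₀x] at this
  exact lt_irrefl _ this
end
end
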